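/- arXiv:2506.03701 — 2 statements merged into one kernel-verified Lean document; each statement's English description precedes it below -/
import Mathlib

section
/- Let f and e be the binary reduction and error-count functions (f exhaustively removes prefix '11' and substrings '011' from a binary string; e counts removals). Define the potential Φ(s) = r − |f(s)| + 3(k − e(s)). Then for every binary string s and every bit b ∈ {0,1}, Φ(s·b) ≤ Φ(s) − 1. Consequently, every binary string s with |f(s)| ≤ r and e(s) ≤ k has length |s| ≤ r + 3k, so the tournament tree T_{n,k} constructed from these labels has height at most r + 3k. -/
/-- One step of the binary reduction together with the error count:
appending `0` appends it to the reduced string; appending `1` appends it if the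
reduced string does not end with `1`, and otherwise removes the trailing `1`
(together with the preceding `0`, if present) and increments the error count. -/
def bstep : List Bool × ℕ → Bool → List Bool × ℕ
  | (acc, m), false => (acc ++ [false], m)
  | (acc, m), true =>
    if acc.getLast? = some true then
      (if acc.dropLast.getLast? = some false then acc.dropLast.dropLast else acc.dropLast, m + 1)
    else (acc ++ [true], m)

def bF (s : List Bool) : List Bool × ℕ := s.foldl bstep ([], 0)

/-- The binary reduction function `f`: exhaustively removes the prefix `11` and substrings `011`. -/
def bf (s : List Bool) : List Bool := (bF s).1

/-- The error-count function `e`: counts the removals performed by `f`. -/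
def be (s : List Bool) : ℕ := (bF s).2

/-- The potential `Φ(s) = r − |f(s)| + 3(k − e(s))`. -/
def Phi (r k : ℕ) (s : List Bool) : ℤ :=
  (r : ℤ) - (bf s).length + 3 * ((k : ℤ) - be s)

lemma bF_append (s : List Bool) (b : Bool) : bF (s ++ [b]) = bstep (bF s) b := by
  simp [bF, List.foldl_append]

lemma step_drop (r k : ℕ) (s : List Bool) (b : Bool) :
    Phi r k (s ++ [b]) ≤ Phi r k s - 1 := by
  have h := bF_append s b
  simp only [Phi, bf, be, h]
  cases b with
  | false => simp [bstep]
  | true =>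
    by_cases h1 : (bF s).1.getLast? = some true
    · have hne : (bF s).1 ≠ [] := by
        intro h'; rw [h'] at h1; simp at h1
      have hlen : 1 ≤ (bF s).1.length := List.length_pos_iff.mpr hne
      by_cases h2 : (bF s).1.dropLast.getLast? = some false
      · have hne2 : (bF s).1.dropLast ≠ [] := by
          intro h'; rw [h'] at h2; simp at h2
        have hlen2 : 1 ≤ (bF s).1.dropLast.length := List.length_pos_iff.mpr hne2
        rw [List.length_dropLast] at hlen2
        simp [bstep, h1, h2, List.length_dropLast]
        push_cast
        omega
      · simp [bstep, h1, h2, List.length_dropLast]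
        push_cast
        omega
    · simp [bstep, h1]

theorem binary_tree_height (r k : ℕ) :
    (∀ (s : List Bool) (b : Bool), Phi r k (s ++ [b]) ≤ Phi r k s - 1) ∧
    (∀ s : List Bool, (bf s).length ≤ r → be s ≤ k → s.length ≤ r + 3 * k) := by
  refine ⟨step_drop r k, ?_⟩
  have key : ∀ s : List Bool, Phi r k s ≤ (r : ℤ) + 3 * k - s.length := by
    intro s
    induction s using List.reverseRecOn with
    | nil => simp [Phi, bf, be, bF]
    | append_singleton t b ih =>
      have := step_drop r k t b
      simp only [List.length_append, List.length_singleton]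
      push_cast
      omega
  intro s hf he
  have h1 := key s
  have h2 : (0 : ℤ) ≤ Phi r k s := by
    simp only [Phi]
    have : ((bf s).length : ℤ) ≤ r := by exact_mod_cast hf
    have : ((be s) : ℤ) ≤ k := by exact_mod_cast he
    omega
  have : (s.length : ℤ) ≤ r + 3 * k := by omega
  exact_mod_cast this
end

section
/- For every binary string s, the reduced string f(s) (obtained by exhaustively removing the prefix '11' and all substrings '011') contains no two consecutive ones. -/
private lemma bstep_inv (p : List Bool × ℕ) (a : Bool)
    (h : List.Chain' (fun a b => ¬(a = true ∧ b = true)) p.1) :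
    List.Chain' (fun a b => ¬(a = true ∧ b = true)) (bstep p a).1 := by
  obtain ⟨acc, m⟩ := p
  cases a with
  | false =>
    simp only [bstep]
    exact List.isChain_append.2 ⟨h, List.isChain_singleton _, by simp⟩
  | true =>
    simp only [bstep]
    split
    · split
      · exact h.prefix (acc.dropLast.dropLast_prefix.trans acc.dropLast_prefix)
      · exact h.prefix acc.dropLast_prefix
    · rename_i hl
      refine List.isChain_append.2 ⟨h, List.isChain_singleton _, ?_⟩
      intro x hx y hy
      simp at hy
      subst hy
      intro ⟨hx1, _⟩
      subst hx1
      simp only [Option.mem_def] at hx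
      exact hl hx

private lemma bfold_inv (s : List Bool) (p : List Bool × ℕ)
    (h : List.Chain' (fun a b => ¬(a = true ∧ b = true)) p.1) :
    List.Chain' (fun a b => ¬(a = true ∧ b = true)) (s.foldl bstep p).1 := by
  induction s generalizing p with
  | nil => exact h
  | cons a s ih => exact ih _ (bstep_inv p a h)

theorem bf_no_consecutive_ones (s : List Bool) :
    List.Chain' (fun a b => ¬(a = true ∧ b = true)) (bf s) := by
  exact bfold_inv s ([], 0) List.isChain_nil
end
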